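/- (Vanishing at infinity.) Let N ≥ 1, let J ∈ L¹(ℝ^N) be nonnegative with unit mass, let ε > 0, c ≥ 0 and R > 0. Let u ∈ C(ℝ^N) ∩ L^∞(ℝ^N) be nonnegative and satisfy (J_ε ∗ u)(x) ≥ c·u(x)² + u(x) for all x ∈ ℝ^N with |x| ≥ R, where c > 0. Then limsup_{|x|→∞} u(x) = 0, i.e. u(x) → 0 as |x| → ∞. -/

import Mathlib

open MeasureTheory Filter Metric Set

noncomputable section

abbrev Sp (N : ℕ) := EuclideanSpace ℝ (Fin N)

/-- The rescaled kernel `J_ε(z) = ε^{-N} J(z/ε)`. -/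
def Jresc (N : ℕ) (J : Sp N → ℝ) (ε : ℝ) (z : Sp N) : ℝ := (1 / ε ^ N) * J (ε⁻¹ • z)

/-- The convolution `(J_ε ∗ u)(x)`. -/
def convJ (N : ℕ) (J : Sp N → ℝ) (ε : ℝ) (u : Sp N → ℝ) (x : Sp N) : ℝ :=
  ∫ y, Jresc N J ε (x - y) * u y

/-- `u` satisfies the nonlocal KPP equation at the point `x`:
`ε^{-m} (J_ε ∗ u - u)(x) + u(x)(a(x) - u(x)) = 0`. -/
def kppEq (N : ℕ) (J a : Sp N → ℝ) (m ε : ℝ) (u : Sp N → ℝ) (x : Sp N) : Prop :=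
  (1 / ε ^ m) * (convJ N J ε u x - u x) + u x * (a x - u x) = 0

/-- Assumption (1.1): `a` continuous, bounded, `a⁺ ≢ 0`, `limsup_{|x|→∞} a(x) < 0`. -/
def assumpA (N : ℕ) (a : Sp N → ℝ) : Prop :=
  Continuous a ∧ (∃ C, ∀ x, |a x| ≤ C) ∧ (∃ x, 0 < a x) ∧
    (∃ R δ : ℝ, 0 < δ ∧ ∀ x : Sp N, R ≤ ‖x‖ → a x ≤ -δ)

/-- Assumption (1.4): `J ∈ L¹` nonnegative, radially symmetric, with unit mass and
finite `m`-th order moment. -/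
def assumpJ (N : ℕ) (J : Sp N → ℝ) (m : ℝ) : Prop :=
  Integrable J ∧ (∀ x, 0 ≤ J x) ∧ (∀ x y : Sp N, ‖x‖ = ‖y‖ → J x = J y) ∧
    (∫ x, J x) = 1 ∧ Integrable (fun x => J x * ‖x‖ ^ m)

set_option maxHeartbeats 1000000 in
/-- **Vanishing at infinity.** If a bounded continuous nonnegative `u` satisfies
`(J_ε ∗ u)(x) ≥ c u(x)² + u(x)` for all `|x| ≥ R` with `c > 0`, then `u(x) → 0` as
`|x| → ∞`. -/
theorem statement11 (N : ℕ) (hN : 1 ≤ N) (J : Sp N → ℝ)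
    (hJint : Integrable J) (hJpos : ∀ x, 0 ≤ J x) (hJmass : (∫ x, J x) = 1)
    (ε : ℝ) (hε : 0 < ε) (c : ℝ) (hc0 : 0 ≤ c) (hc : 0 < c) (R : ℝ) (hR : 0 < R)
    (u : Sp N → ℝ) (hucont : Continuous u) (hubdd : ∃ C, ∀ x, |u x| ≤ C)
    (hupos : ∀ x, 0 ≤ u x)
    (hineq : ∀ x : Sp N, R ≤ ‖x‖ → c * u x ^ 2 + u x ≤ convJ N J ε u x) :
    Tendsto u (cocompact (Sp N)) (nhds 0) := by
  classical
  obtain ⟨C, hC⟩ := hubdd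
  have hC0 : 0 ≤ C := le_trans (abs_nonneg _) (hC 0)
  haveI : Nonempty (Fin N) := Fin.pos_iff_nonempty.mp hN
  haveI : Nontrivial (Sp N) := by
    refine ⟨⟨0, EuclideanSpace.single (Classical.arbitrary (Fin N)) (1 : ℝ), fun h => ?_⟩⟩
    have := congrArg (fun v : Sp N => v (Classical.arbitrary (Fin N))) h
    simp [EuclideanSpace.single_apply] at this
  set Jε := Jresc N J ε with hJε
  have hJεnn : ∀ z, 0 ≤ Jε z := fun z =>
    mul_nonneg (div_nonneg zero_le_one (pow_nonneg hε.le N)) (hJpos _)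
  have hJεint : Integrable Jε := by
    have h1 : Integrable (fun z : Sp N => J (ε⁻¹ • z)) := by
      rw [integrable_comp_smul_iff volume J (inv_ne_zero hε.ne')]
      exact hJint
    have heq : Jε = fun z => (1 / ε ^ N) * J (ε⁻¹ • z) := by
      funext z; simp [hJε, Jresc]
    rw [heq]
    exact h1.const_mul (1 / ε ^ N)
  have hJεmass : ∫ z, Jε z = 1 := by
    have h1 : ∫ z : Sp N, J (ε⁻¹ • z) = ε ^ N * ∫ x, J x := by
      simpa [finrank_euclideanSpace_fin, smul_eq_mul] using
        Measure.integral_comp_inv_smul_of_nonneg (volume : Measure (Sp N)) J hε.le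
    rw [hJε]
    simp only [Jresc]
    rw [integral_const_mul, h1, hJmass]
    field_simp
  have hmeasu : AEStronglyMeasurable u volume := hucont.aestronglyMeasurable
  have hint1 : ∀ x : Sp N, Integrable (fun y => Jε (x - y)) := fun x =>
    hJεint.comp_sub_left x
  have hintf : ∀ x : Sp N, Integrable (fun y => Jε (x - y) * u y) := by
    intro x
    have := (hint1 x).bdd_mul (c := C) hmeasu (Filter.Eventually.of_forall fun y => by simpa using hC y)
    simpa [mul_comm] using this
  -- tail estimate for Jε
  have tail : ∀ η : ℝ, 0 < η → ∃ ρ : ℝ, 0 < ρ ∧ ∫ z in {z : Sp N | ρ ≤ ‖z‖}, Jε z ≤ η := by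
    intro η hη
    have hmono : Monotone (fun n : ℕ => closedBall (0 : Sp N) n) := fun m n hmn =>
      closedBall_subset_closedBall (by exact_mod_cast hmn)
    have hunion : (⋃ n : ℕ, closedBall (0 : Sp N) n) = univ := by
      ext z
      simp only [mem_iUnion, mem_closedBall, dist_zero_right, mem_univ, iff_true]
      exact exists_nat_ge ‖z‖
    have htend := tendsto_setIntegral_of_monotone (fun n : ℕ => measurableSet_closedBall)
      hmono (by rw [hunion]; exact hJεint.integrableOn)
    rw [hunion] at htend
    have huniv : ∫ z in (univ : Set (Sp N)), Jε z = 1 := by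
      rw [setIntegral_univ, hJεmass]
    rw [huniv] at htend
    obtain ⟨n, hn⟩ := (htend.eventually (eventually_gt_nhds (by linarith : 1 - η < 1))).exists
    refine ⟨(n : ℝ) + 1, by positivity, ?_⟩
    have hcompl : ∫ z in (closedBall (0 : Sp N) n)ᶜ, Jε z ≤ η := by
      have hadd := integral_add_compl (measurableSet_closedBall :
        MeasurableSet (closedBall (0 : Sp N) n)) hJεint
      rw [hJεmass] at hadd
      linarith
    refine le_trans ?_ hcompl
    apply setIntegral_mono_set (hJεint.integrableOn)
      (Filter.Eventually.of_forall fun z => hJεnn z)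
    apply HasSubset.Subset.eventuallyLE
    intro z hz
    simp only [mem_setOf_eq] at hz
    simp only [mem_compl_iff, mem_closedBall, dist_zero_right, not_le]
    linarith
  set F := cocompact (Sp N) with hF
  have hbddabove : F.IsBoundedUnder (· ≤ ·) u :=
    Filter.isBoundedUnder_of ⟨C, fun x => (abs_le.mp (hC x)).2⟩
  have hbddbelow : F.IsBoundedUnder (· ≥ ·) u :=
    Filter.isBoundedUnder_of ⟨0, fun x => hupos x⟩
  set L := limsup u F with hLdef
  clear_value L
  have hL0 : 0 ≤ L := hLdef ▸
    le_limsup_of_frequently_le ((Filter.Eventually.of_forall fun x => hupos x).frequently)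
      hbddabove
  -- key estimate
  have key : ∀ δ : ℝ, 0 < δ → ∀ᶠ x in F, c * u x ^ 2 + u x ≤ L + 2 * δ := by
    intro δ hδ
    have h1 : ∀ᶠ y in F, u y < L + δ :=
      eventually_lt_of_limsup_lt (by linarith) hbddabove
    rw [eventually_iff, hF, Filter.mem_cocompact] at h1
    obtain ⟨K, hK, hKsub⟩ := h1
    obtain ⟨r₀, hr₀⟩ := hK.isBounded.subset_closedBall 0
    have hr₀' : ∀ y : Sp N, r₀ + 1 ≤ ‖y‖ → u y < L + δ := by
      intro y hy
      apply hKsub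
      simp only [mem_compl_iff]
      intro hyK
      have := hr₀ hyK
      rw [mem_closedBall, dist_zero_right] at this
      linarith
    obtain ⟨ρ, hρ, hρint⟩ := tail (δ / (C + 1)) (by positivity)
    set r₁ := max R (r₀ + 1 + ρ) with hr₁
    have hev : {x : Sp N | r₁ ≤ ‖x‖} ∈ F := by
      rw [hF, Filter.mem_cocompact]
      refine ⟨closedBall 0 r₁, isCompact_closedBall _ _, fun x hx => ?_⟩
      simp only [mem_compl_iff, mem_closedBall, dist_zero_right, not_le] at hx
      exact le_of_lt hx
    filter_upwards [hev] with x hx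
    have hxR : R ≤ ‖x‖ := le_trans (le_max_left _ _) hx
    have hx2 : r₀ + 1 + ρ ≤ ‖x‖ := le_trans (le_max_right _ _) hx
    refine le_trans (hineq x hxR) ?_
    set A : Set (Sp N) := {y | r₀ + 1 ≤ ‖y‖} with hA'
    have hA : MeasurableSet A := measurableSet_le measurable_const measurable_norm
    have hsplit : convJ N J ε u x
        = (∫ y in A, Jε (x - y) * u y) + ∫ y in Aᶜ, Jε (x - y) * u y := by
      rw [convJ, ← hJε]
      exact (integral_add_compl hA (hintf x)).symm
    have hb1 : ∫ y in A, Jε (x - y) * u y ≤ L + δ := by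
      have step1 : ∫ y in A, Jε (x - y) * u y ≤ ∫ y in A, Jε (x - y) * (L + δ) := by
        refine setIntegral_mono_on ((hintf x).integrableOn)
          (((hint1 x).integrableOn).mul_const _) hA fun y hy => ?_
        exact mul_le_mul_of_nonneg_left (le_of_lt (hr₀' y hy)) (hJεnn _)
      have step2 : ∫ y in A, Jε (x - y) * (L + δ)
          = (∫ y in A, Jε (x - y)) * (L + δ) := integral_mul_const _ _
      have step3 : ∫ y in A, Jε (x - y) ≤ ∫ y, Jε (x - y) :=
        setIntegral_le_integral (hint1 x) (Filter.Eventually.of_forall fun y => hJεnn _)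
      have step4 : ∫ y, Jε (x - y) = 1 := by
        rw [integral_sub_left_eq_self Jε volume x, hJεmass]
      have step5 : (∫ y in A, Jε (x - y)) * (L + δ) ≤ 1 * (L + δ) := by
        apply mul_le_mul_of_nonneg_right _ (by linarith)
        rw [← step4]; exact step3
      calc ∫ y in A, Jε (x - y) * u y ≤ (∫ y in A, Jε (x - y)) * (L + δ) := by
            rw [← step2]; exact step1
        _ ≤ 1 * (L + δ) := step5
        _ = L + δ := one_mul _
    have hb2 : ∫ y in Aᶜ, Jε (x - y) * u y ≤ δ := by
      have stepa : ∫ y in Aᶜ, Jε (x - y) * u y ≤ ∫ y in Aᶜ, Jε (x - y) * C := by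
        refine setIntegral_mono_on ((hintf x).integrableOn)
          (((hint1 x).integrableOn).mul_const _) hA.compl fun y _ => ?_
        exact mul_le_mul_of_nonneg_left (le_trans (le_abs_self _) (hC y)) (hJεnn _)
      have stepb : ∫ y in Aᶜ, Jε (x - y) * C = (∫ y in Aᶜ, Jε (x - y)) * C :=
        integral_mul_const _ _
      have stepsub : Aᶜ ⊆ {y : Sp N | ρ ≤ ‖x - y‖} := by
        intro y hy
        simp only [hA', mem_compl_iff, mem_setOf_eq, not_le] at hy
        simp only [mem_setOf_eq]
        have h5 : ‖x‖ - ‖y‖ ≤ ‖x - y‖ := norm_sub_norm_le x y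
        linarith
      have stepc : ∫ y in Aᶜ, Jε (x - y) ≤ ∫ y in {y : Sp N | ρ ≤ ‖x - y‖}, Jε (x - y) :=
        setIntegral_mono_set ((hint1 x).integrableOn)
          (Filter.Eventually.of_forall fun y => hJεnn _)
          (HasSubset.Subset.eventuallyLE stepsub)
      have stepd : ∫ y in {y : Sp N | ρ ≤ ‖x - y‖}, Jε (x - y)
          = ∫ z in {z : Sp N | ρ ≤ ‖z‖}, Jε z := by
        have hmp : MeasurePreserving (fun y : Sp N => x - y) volume volume :=
          Measure.measurePreserving_sub_left volume x
        have hemb : MeasurableEmbedding (fun y : Sp N => x - y) :=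
          (MeasurableEquiv.subLeft x).measurableEmbedding
        exact hmp.setIntegral_preimage_emb hemb Jε {z : Sp N | ρ ≤ ‖z‖}
      have hfinal : (∫ y in Aᶜ, Jε (x - y)) ≤ δ / (C + 1) := by
        calc (∫ y in Aᶜ, Jε (x - y)) ≤ ∫ y in {y : Sp N | ρ ≤ ‖x - y‖}, Jε (x - y) := stepc
          _ = ∫ z in {z : Sp N | ρ ≤ ‖z‖}, Jε z := stepd
          _ ≤ δ / (C + 1) := hρint
      have hCd : (∫ y in Aᶜ, Jε (x - y)) * C ≤ (δ / (C + 1)) * C :=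
        mul_le_mul_of_nonneg_right hfinal hC0
      have hCd2 : (δ / (C + 1)) * C ≤ δ := by
        rw [div_mul_eq_mul_div, div_le_iff₀ (by linarith : (0:ℝ) < C + 1)]
        nlinarith
      calc ∫ y in Aᶜ, Jε (x - y) * u y ≤ (∫ y in Aᶜ, Jε (x - y)) * C := by
            rw [← stepb]; exact stepa
        _ ≤ δ := le_trans hCd hCd2
    rw [hsplit]
    linarith
  -- conclude limsup ≤ 0
  have hlimsup : L ≤ 0 := by
    by_contra hL
    push_neg at hL
    set δ := min (L / 2) (c * L ^ 2 / 24) with hδdef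
    clear_value δ
    have hδpos : 0 < δ := by
      rw [hδdef]
      apply lt_min
      · linarith
      · nlinarith [mul_pos hc (mul_pos hL hL)]
    have hδ1 : δ ≤ L / 2 := by rw [hδdef]; exact min_le_left _ _
    have hδ2 : δ ≤ c * L ^ 2 / 24 := by rw [hδdef]; exact min_le_right _ _
    have h2 := key δ hδpos
    have h3 : ∃ᶠ x in F, L - δ < u x :=
      frequently_lt_of_lt_limsup (hbddbelow.isCoboundedUnder_le) (by linarith)
    obtain ⟨x, hx1, hx2⟩ := (h3.and_eventually h2).exists
    have hLδ : 0 ≤ L - δ := by linarith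
    have hux : L - δ ≤ u x := le_of_lt hx1
    have hmono : c * (L - δ) ^ 2 + (L - δ) ≤ c * u x ^ 2 + u x := by
      nlinarith [mul_nonneg (mul_nonneg hc.le (sub_nonneg.mpr hux))
        (by linarith : (0:ℝ) ≤ u x + (L - δ))]
    have h4 : c * (L - δ) ^ 2 ≤ 3 * δ := by linarith
    have h5 : (L / 2) ^ 2 ≤ (L - δ) ^ 2 := by nlinarith
    have h6 : c * (L / 2) ^ 2 ≤ c * (L - δ) ^ 2 := mul_le_mul_of_nonneg_left h5 hc.le
    nlinarith [mul_pos hc (mul_pos hL hL)]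
  have hliminf : (0 : ℝ) ≤ liminf u F :=
    le_liminf_of_le (hbddabove.isCoboundedUnder_ge)
      (Filter.Eventually.of_forall fun x => hupos x)
  have hlimsup2 : limsup u F ≤ 0 := by rw [← hLdef]; exact hlimsup
  exact tendsto_of_le_liminf_of_limsup_le hliminf hlimsup2 hbddabove hbddbelow
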